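/- Let λ > 0, σ > 0, 0 ≤ x < L, and for each d ∈ ℕ, d ≥ 1, define T_d(x) = (1/(λ^(d/2) σ²)) ∫ₓᴸ z^(1-d) e^(λ z²) γ(d/2, λ z²) dz. Then lim_{d→∞} d·T_d(x) = (L² − x²)/σ². In particular T_d(x) ~ (L² − x²)/(σ² d) as d → ∞, independently of λ. -/

import Mathlib

open MeasureTheory intervalIntegral Filter Set

noncomputable def lowerGamma (a x : ℝ) : ℝ := ∫ t in (0:ℝ)..x, t ^ (a - 1) * Real.exp (-t)

noncomputable def mfet (d : ℕ) (lam σ x L : ℝ) : ℝ :=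
  (1 / (lam ^ ((d : ℝ) / 2) * σ ^ 2)) *
    ∫ z in x..L, z ^ ((1 : ℝ) - d) * Real.exp (lam * z ^ 2) * lowerGamma ((d : ℝ) / 2) (lam * z ^ 2)

noncomputable def Iaux (k : ℕ) (lam z : ℝ) : ℝ :=
  ∫ u in (0:ℝ)..z, u ^ k * Real.exp (-(lam * u ^ 2))

lemma Iaux_contIntegrand (k : ℕ) (lam : ℝ) :
    Continuous fun u : ℝ => u ^ k * Real.exp (-(lam * u ^ 2)) := by fun_prop

lemma Iaux_cont (k : ℕ) (lam : ℝ) : Continuous (Iaux k lam) :=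
  intervalIntegral.continuous_primitive
    (fun a b => (Iaux_contIntegrand k lam).intervalIntegrable a b) 0

lemma Iaux_nonneg (k : ℕ) (lam : ℝ) {z : ℝ} (hz : 0 ≤ z) : 0 ≤ Iaux k lam z := by
  apply intervalIntegral.integral_nonneg hz
  intro u hu
  exact mul_nonneg (pow_nonneg hu.1 k) (Real.exp_nonneg _)

lemma Iaux_le (k : ℕ) {lam : ℝ} (hlam : 0 ≤ lam) {z : ℝ} (hz : 0 ≤ z) :
    Iaux k lam z ≤ z ^ (k + 1) / (k + 1) := by
  have h1 : Iaux k lam z ≤ ∫ u in (0:ℝ)..z, u ^ k := by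
    apply intervalIntegral.integral_mono_on hz
      ((Iaux_contIntegrand k lam).intervalIntegrable 0 z)
      ((continuous_pow k).intervalIntegrable 0 z)
    intro u hu
    have hu0 : 0 ≤ u := hu.1
    have : Real.exp (-(lam * u ^ 2)) ≤ 1 := by
      rw [Real.exp_le_one_iff]
      nlinarith
    nlinarith [pow_nonneg hu0 k]
  rw [integral_pow] at h1
  simpa using h1

lemma Iaux_ftc (k : ℕ) (lam z : ℝ) :
    ((k : ℝ) + 1) * Iaux k lam z
      = z ^ (k + 1) * Real.exp (-(lam * z ^ 2)) + 2 * lam * Iaux (k + 2) lam z := by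
  have hderiv : ∀ u : ℝ, HasDerivAt (fun u : ℝ => u ^ (k + 1) * Real.exp (-(lam * u ^ 2)))
      (((k : ℝ) + 1) * (u ^ k * Real.exp (-(lam * u ^ 2)))
        - 2 * lam * (u ^ (k + 2) * Real.exp (-(lam * u ^ 2)))) u := by
    intro u
    have h1 : HasDerivAt (fun u : ℝ => u ^ (k + 1)) (((k : ℝ) + 1) * u ^ k) u := by
      simpa using hasDerivAt_pow (k + 1) u
    have h2 : HasDerivAt (fun u : ℝ => -(lam * u ^ 2)) (-(lam * (2 * u))) u := by
      have := (hasDerivAt_pow 2 u).const_mul lam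
      simpa [Pi.neg_def] using this.neg
    have h3 : HasDerivAt (fun u : ℝ => Real.exp (-(lam * u ^ 2)))
        (Real.exp (-(lam * u ^ 2)) * (-(lam * (2 * u)))) u := (Real.hasDerivAt_exp _).comp u h2
    have := h1.mul h3
    refine this.congr_deriv ?_
    ring
  have key : (∫ u in (0:ℝ)..z, (((k : ℝ) + 1) * (u ^ k * Real.exp (-(lam * u ^ 2)))
        - 2 * lam * (u ^ (k + 2) * Real.exp (-(lam * u ^ 2)))))
      = z ^ (k + 1) * Real.exp (-(lam * z ^ 2)) := by
    rw [intervalIntegral.integral_eq_sub_of_hasDerivAt (fun u _ => hderiv u)]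
    · simp
    · apply Continuous.intervalIntegrable
      have := Iaux_contIntegrand k lam
      have := Iaux_contIntegrand (k + 2) lam
      fun_prop
  rw [intervalIntegral.integral_sub, intervalIntegral.integral_const_mul,
      intervalIntegral.integral_const_mul] at key
  · unfold Iaux
    linarith
  · exact ((continuous_const.mul (Iaux_contIntegrand k lam))).intervalIntegrable 0 z
  · exact ((continuous_const.mul (Iaux_contIntegrand (k + 2) lam))).intervalIntegrable 0 z

lemma lowerGamma_eq {d : ℕ} (hd : 3 ≤ d) {lam z : ℝ} (hlam : 0 < lam) (hz : 0 < z) :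
    lowerGamma ((d : ℝ) / 2) (lam * z ^ 2) = 2 * lam ^ ((d : ℝ) / 2) * Iaux (d - 1) lam z := by
  set p : ℝ := (d : ℝ) / 2 - 1 with hp
  have hp0 : 0 ≤ p := by
    have : (3 : ℝ) ≤ (d : ℝ) := by exact_mod_cast hd
    rw [hp]; linarith
  have hg : Continuous fun t : ℝ => t ^ p * Real.exp (-t) :=
    (Real.continuous_rpow_const hp0).mul (Real.continuous_exp.comp continuous_neg)
  have hf : ∀ u ∈ uIcc (0:ℝ) z, HasDerivAt (fun u : ℝ => lam * u ^ 2) (2 * lam * u) u := by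
    intro u _
    have := (hasDerivAt_pow 2 u).const_mul lam
    simpa [mul_comm, mul_assoc, mul_left_comm] using this
  have hf' : ContinuousOn (fun u : ℝ => 2 * lam * u) (uIcc (0:ℝ) z) := by fun_prop
  have subst := intervalIntegral.integral_comp_smul_deriv hf hf' hg
  have h0 : lam * (0:ℝ) ^ 2 = 0 := by ring
  rw [h0] at subst
  unfold lowerGamma
  rw [show (d : ℝ) / 2 - 1 = p from rfl, ← subst]
  have hcongr : ∀ u ∈ uIoc (0:ℝ) z,
      (2 * lam * u) • ((fun t : ℝ => t ^ p * Real.exp (-t)) ∘ fun u : ℝ => lam * u ^ 2) u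
        = 2 * lam ^ ((d : ℝ) / 2) * (u ^ (d - 1) * Real.exp (-(lam * u ^ 2))) := by
    intro u hu
    rw [uIoc_of_le hz.le] at hu
    have hu0 : 0 < u := hu.1
    have h1 : (lam * u ^ 2) ^ p = lam ^ p * u ^ ((d : ℝ) - 2) := by
      rw [Real.mul_rpow hlam.le (sq_nonneg u)]
      congr 1
      rw [← Real.rpow_natCast u 2, ← Real.rpow_mul hu0.le]
      norm_num [hp]
      ring_nf
    have h2 : u ^ ((d : ℝ) - 2) = u ^ (d - 2 : ℕ) := by
      rw [← Real.rpow_natCast u (d - 2)]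
      congr 1
      have : (2 : ℕ) ≤ d := by omega
      push_cast [Nat.cast_sub this]
      ring
    have h3 : lam ^ p * lam = lam ^ ((d : ℝ) / 2) := by
      rw [← Real.rpow_add_one hlam.ne' p, hp]
      ring_nf
    have h4 : u * u ^ (d - 2 : ℕ) = u ^ (d - 1 : ℕ) := by
      rw [← pow_succ']
      congr 1
      omega
    simp only [Function.comp, smul_eq_mul, h1, h2]
    calc 2 * lam * u * (lam ^ p * u ^ (d - 2 : ℕ) * Real.exp (-(lam * u ^ 2)))
        = 2 * (lam ^ p * lam) * (u * u ^ (d - 2 : ℕ)) * Real.exp (-(lam * u ^ 2)) := by ring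
      _ = 2 * lam ^ ((d : ℝ) / 2) * (u ^ (d - 1 : ℕ) * Real.exp (-(lam * u ^ 2))) := by
          rw [h3, h4]; ring
  rw [intervalIntegral.integral_congr_ae (Filter.Eventually.of_forall hcongr),
      intervalIntegral.integral_const_mul]
  rfl

theorem mfet_asymptotics (lam σ x L : ℝ) (hlam : 0 < lam) (hσ : 0 < σ)
    (hx : 0 ≤ x) (hxL : x < L) :
    Filter.Tendsto (fun d : ℕ => (d : ℝ) * mfet d lam σ x L) Filter.atTop
      (nhds ((L ^ 2 - x ^ 2) / σ ^ 2)) := by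
  have hL : 0 < L := lt_of_le_of_lt hx hxL
  set C : ℝ := 4 * lam * L ^ 3 * Real.exp (lam * L ^ 2) with hC
  have hC0 : 0 ≤ C := by positivity
  set ψ : ℕ → ℝ → ℝ := fun d z =>
    2 * z + 4 * lam * z * Real.exp (lam * z ^ 2) * Iaux (d + 1) lam z * (z ^ d)⁻¹ with hψ
  set J : ℕ → ℝ := fun d => ∫ z in x..L, ψ d z with hJ
  -- pointwise lower bound
  have hlow : ∀ d : ℕ, ∀ z ∈ Icc x L, 2 * z ≤ ψ d z := by
    intro d z hz
    have hz0 : 0 ≤ z := le_trans hx hz.1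
    have h1 := Iaux_nonneg (d + 1) lam hz0
    have h2 : (0:ℝ) ≤ (z ^ d)⁻¹ := by positivity
    have : 0 ≤ 4 * lam * z * Real.exp (lam * z ^ 2) * Iaux (d + 1) lam z * (z ^ d)⁻¹ := by
      have := Real.exp_nonneg (lam * z ^ 2)
      positivity
    simp only [hψ]
    linarith
  -- pointwise upper bound
  have hup : ∀ d : ℕ, ∀ z ∈ Icc x L, ψ d z ≤ 2 * z + C / ((d : ℝ) + 2) := by
    intro d z hz
    have hz0 : 0 ≤ z := le_trans hx hz.1
    have hzL : z ≤ L := hz.2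
    have hd2 : (0:ℝ) < (d : ℝ) + 2 := by positivity
    have hR : 4 * lam * z * Real.exp (lam * z ^ 2) * Iaux (d + 1) lam z * (z ^ d)⁻¹
        ≤ C / ((d : ℝ) + 2) := by
      rcases eq_or_lt_of_le hz0 with h0 | h0
      · rw [← h0]
        simp only [mul_zero, zero_mul]
        positivity
      · have hI := Iaux_le (d + 1) hlam.le hz0
        have hzd : (0:ℝ) < z ^ d := pow_pos h0 d
        have hIle : Iaux (d + 1) lam z ≤ z ^ (d + 2) / ((d : ℝ) + 2) := by
          refine hI.trans (le_of_eq ?_)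
          push_cast
          ring_nf
        have step1 : 4 * lam * z * Real.exp (lam * z ^ 2) * Iaux (d + 1) lam z * (z ^ d)⁻¹
            ≤ 4 * lam * z * Real.exp (lam * z ^ 2) * (z ^ (d + 2) / ((d : ℝ) + 2)) * (z ^ d)⁻¹ := by
          have hpos : 0 ≤ 4 * lam * z * Real.exp (lam * z ^ 2) := by positivity
          have hinv : (0:ℝ) ≤ (z ^ d)⁻¹ := by positivity
          have := mul_le_mul_of_nonneg_left hIle hpos
          exact mul_le_mul_of_nonneg_right this hinv
        have step2 : 4 * lam * z * Real.exp (lam * z ^ 2) * (z ^ (d + 2) / ((d : ℝ) + 2)) * (z ^ d)⁻¹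
            = 4 * lam * z ^ 3 * Real.exp (lam * z ^ 2) / ((d : ℝ) + 2) := by
          rw [pow_add]
          field_simp
        have step3 : 4 * lam * z ^ 3 * Real.exp (lam * z ^ 2) / ((d : ℝ) + 2)
            ≤ C / ((d : ℝ) + 2) := by
          have h1 : z ^ 3 ≤ L ^ 3 := pow_le_pow_left₀ hz0 hzL 3
          have h2 : Real.exp (lam * z ^ 2) ≤ Real.exp (lam * L ^ 2) := by
            apply Real.exp_le_exp.2
            nlinarith [pow_le_pow_left₀ hz0 hzL 2]
          have hnum : 4 * lam * z ^ 3 * Real.exp (lam * z ^ 2) ≤ C := by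
            rw [hC]
            nlinarith [mul_le_mul h1 h2 (Real.exp_nonneg _) (pow_nonneg hL.le 3), hlam.le]
          gcongr
        calc 4 * lam * z * Real.exp (lam * z ^ 2) * Iaux (d + 1) lam z * (z ^ d)⁻¹
            ≤ 4 * lam * z * Real.exp (lam * z ^ 2) * (z ^ (d + 2) / ((d : ℝ) + 2)) * (z ^ d)⁻¹ := step1
          _ = 4 * lam * z ^ 3 * Real.exp (lam * z ^ 2) / ((d : ℝ) + 2) := step2
          _ ≤ C / ((d : ℝ) + 2) := step3
    simp only [hψ]
    linarith
  -- integrability of ψ d on [x, L]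
  have hint : ∀ d : ℕ, IntervalIntegrable (ψ d) volume x L := by
    intro d
    have hm : Measurable (ψ d) := by
      simp only [hψ]
      apply Measurable.add
      · fun_prop
      · exact ((((measurable_const.mul measurable_id).mul
          (Real.measurable_exp.comp (by fun_prop))).mul
          (Iaux_cont (d + 1) lam).measurable).mul ((measurable_id.pow_const d).inv))
    rw [intervalIntegrable_iff_integrableOn_Ioc_of_le hxL.le]
    apply Integrable.mono' (g := fun _ : ℝ => 2 * L + C)
      (integrableOn_const measure_Ioc_lt_top.ne) hm.aestronglyMeasurable.restrict
    filter_upwards [ae_restrict_mem measurableSet_Ioc] with z hz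
    have hz' : z ∈ Icc x L := Ioc_subset_Icc_self hz
    have h1 := hlow d z hz'
    have h2 := hup d z hz'
    have h3 : C / ((d : ℝ) + 2) ≤ C := by
      apply div_le_self hC0
      have : (0:ℝ) ≤ (d : ℝ) := Nat.cast_nonneg d
      linarith
    have hz0 : 0 ≤ z := le_trans hx hz'.1
    rw [Real.norm_eq_abs, abs_le]
    exact ⟨by linarith, h2.trans (add_le_add (by linarith [hz'.2]) h3)⟩
  -- squeeze on J
  have h2z : IntervalIntegrable (fun z : ℝ => 2 * z) volume x L := by
    apply Continuous.intervalIntegrable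
    fun_prop
  have hi2z : (∫ z in x..L, 2 * z) = L ^ 2 - x ^ 2 := by
    rw [intervalIntegral.integral_const_mul, integral_id]
    ring
  have hJlow : ∀ d : ℕ, L ^ 2 - x ^ 2 ≤ J d := by
    intro d
    have := intervalIntegral.integral_mono_on hxL.le h2z (hint d) (hlow d)
    rw [hi2z] at this
    exact this
  have hJup : ∀ d : ℕ, J d ≤ L ^ 2 - x ^ 2 + C / ((d : ℝ) + 2) * (L - x) := by
    intro d
    have hg : IntervalIntegrable (fun z : ℝ => 2 * z + C / ((d : ℝ) + 2)) volume x L := by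
      apply Continuous.intervalIntegrable
      fun_prop
    have h := intervalIntegral.integral_mono_on hxL.le (hint d) hg (hup d)
    rw [intervalIntegral.integral_add h2z intervalIntegrable_const, hi2z,
        intervalIntegral.integral_const, smul_eq_mul] at h
    exact h.trans (le_of_eq (by ring))
  -- J tends to L^2 - x^2
  have hJtend : Filter.Tendsto J Filter.atTop (nhds (L ^ 2 - x ^ 2)) := by
    have hup2 : Filter.Tendsto (fun d : ℕ => L ^ 2 - x ^ 2 + C / ((d : ℝ) + 2) * (L - x))
        Filter.atTop (nhds (L ^ 2 - x ^ 2)) := by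
      have hA : Filter.Tendsto (fun d : ℕ => ((d : ℝ) + 2)) Filter.atTop Filter.atTop :=
        Filter.tendsto_atTop_add_const_right _ 2 tendsto_natCast_atTop_atTop
      have hB : Filter.Tendsto (fun d : ℕ => ((d : ℝ) + 2)⁻¹) Filter.atTop (nhds 0) :=
        hA.inv_tendsto_atTop
      have hD : Filter.Tendsto (fun d : ℕ => C / ((d : ℝ) + 2) * (L - x))
          Filter.atTop (nhds 0) := by
        have := (hB.const_mul C).mul_const (L - x)
        simpa [div_eq_mul_inv] using this
      have := hD.const_add (L ^ 2 - x ^ 2)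
      simpa using this
    exact tendsto_of_tendsto_of_tendsto_of_le_of_le tendsto_const_nhds hup2 hJlow hJup
  -- identify d * mfet with (1/σ^2) * J d for d ≥ 3
  have hkey : ∀ d : ℕ, 3 ≤ d → (d : ℝ) * mfet d lam σ x L = 1 / σ ^ 2 * J d := by
    intro d hd3
    have hd1 : 1 ≤ d := by omega
    have hlamd : lam ^ ((d : ℝ) / 2) ≠ 0 := (Real.rpow_pos_of_pos hlam _).ne'
    have hA : (∫ z in x..L,
          z ^ ((1:ℝ) - d) * Real.exp (lam * z ^ 2) * lowerGamma ((d : ℝ) / 2) (lam * z ^ 2))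
        = lam ^ ((d : ℝ) / 2) *
          ∫ z in x..L, 2 * z * Real.exp (lam * z ^ 2) * Iaux (d - 1) lam z * (z ^ d)⁻¹ := by
      rw [← intervalIntegral.integral_const_mul]
      apply intervalIntegral.integral_congr_ae
      apply Filter.Eventually.of_forall
      intro z hz
      rw [uIoc_of_le hxL.le] at hz
      have hz0 : 0 < z := lt_of_le_of_lt hx hz.1
      rw [lowerGamma_eq hd3 hlam hz0]
      have hz1 : z ^ ((1:ℝ) - (d : ℕ)) = z * (z ^ d)⁻¹ := by
        rw [Real.rpow_sub hz0, Real.rpow_one, Real.rpow_natCast, div_eq_mul_inv]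
      rw [hz1]
      ring
    have hB : (d : ℝ) *
          (∫ z in x..L, 2 * z * Real.exp (lam * z ^ 2) * Iaux (d - 1) lam z * (z ^ d)⁻¹)
        = J d := by
      rw [← intervalIntegral.integral_const_mul]
      apply intervalIntegral.integral_congr_ae
      apply Filter.Eventually.of_forall
      intro z hz
      rw [uIoc_of_le hxL.le] at hz
      have hz0 : 0 < z := lt_of_le_of_lt hx hz.1
      have hftc := Iaux_ftc (d - 1) lam z
      have hidx : d - 1 + 2 = d + 1 := by omega
      have hidx2 : d - 1 + 1 = d := by omega
      have hcast : ((d - 1 : ℕ) : ℝ) + 1 = (d : ℝ) := by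
        rw [Nat.cast_sub hd1]; ring
      rw [hidx, hidx2, hcast, Real.exp_neg] at hftc
      have hzd : (z : ℝ) ^ d ≠ 0 := (pow_pos hz0 d).ne'
      simp only [hψ]
      calc (d : ℝ) * (2 * z * Real.exp (lam * z ^ 2) * Iaux (d - 1) lam z * (z ^ d)⁻¹)
          = 2 * z * Real.exp (lam * z ^ 2) * ((d : ℝ) * Iaux (d - 1) lam z) * (z ^ d)⁻¹ := by
            ring
        _ = 2 * z * Real.exp (lam * z ^ 2) *
              (z ^ d * (Real.exp (lam * z ^ 2))⁻¹ + 2 * lam * Iaux (d + 1) lam z) * (z ^ d)⁻¹ := by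
            rw [hftc]
        _ = 2 * z + 4 * lam * z * Real.exp (lam * z ^ 2) * Iaux (d + 1) lam z * (z ^ d)⁻¹ := by
            field_simp
            ring
    unfold mfet
    rw [hA]
    calc (d : ℝ) * (1 / (lam ^ ((d : ℝ) / 2) * σ ^ 2) * (lam ^ ((d : ℝ) / 2) *
            ∫ z in x..L, 2 * z * Real.exp (lam * z ^ 2) * Iaux (d - 1) lam z * (z ^ d)⁻¹))
        = 1 / σ ^ 2 * ((d : ℝ) *
            ∫ z in x..L, 2 * z * Real.exp (lam * z ^ 2) * Iaux (d - 1) lam z * (z ^ d)⁻¹) := by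
          generalize (∫ z in x..L, 2 * z * Real.exp (lam * z ^ 2) * Iaux (d - 1) lam z * (z ^ d)⁻¹) = I
          field_simp
      _ = 1 / σ ^ 2 * J d := by rw [hB]
  have heq : (fun d : ℕ => 1 / σ ^ 2 * J d)
      =ᶠ[Filter.atTop] fun d : ℕ => (d : ℝ) * mfet d lam σ x L := by
    filter_upwards [Filter.eventually_ge_atTop 3] with d hd
    exact (hkey d hd).symm
  have hfin := (hJtend.const_mul (1 / σ ^ 2)).congr' heq
  rw [show (1:ℝ) / σ ^ 2 * (L ^ 2 - x ^ 2) = (L ^ 2 - x ^ 2) / σ ^ 2 from by ring] at hfin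
  exact hfin
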